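/- Let m, n, p, d, e ∈ ℕ with d ≤ p ≤ min(m,n), d ≤ m and e ≤ n. Let U_X ⊆ ℝ^m and U_Y ⊆ ℝ^n be open, let f : U_X → ℝ^{m−d} and g : U_Y → ℝ^{n−e} be real-analytic, and set M = {x ∈ U_X : f(x) = 0} and N = {y ∈ U_Y : g(y) = 0}; assume the Jacobian of f has rank m−d at every point of M and the Jacobian of g has rank n−e at every point of N. Let Π^M_P : ℝ^m → ℝ^p, Π^P_U : ℝ^p → ℝ^d, Π^N_P : ℝ^n → ℝ^p, and Π^N_V : ℝ^n → ℝ^e be coordinate projections such that: Π^M_U := Π^P_U ∘ Π^M_P is a good direction for M; Π^N_V is a good direction for N; and Π^N_P(N) ⊆ P := Π^M_P(M). Set Π^N_U := Π^P_U ∘ Π^N_P and M×_P N := {(x,y) ∈ M×N : Π^M_P(x) = Π^N_P(y)}. Then: (i) M×_P N = {(x,y) ∈ U_X×U_Y : f(x) = 0, g(y) = 0, and Π^M_U(x) − Π^N_U(y) = 0}; (ii) the Jacobian of the map (x,y) ↦ (f(x), g(y), Π^M_U(x) − Π^N_U(y)) from U_X×U_Y to ℝ^{m+n−e} has rank m+n−e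 at every point of M×_P N; (iii) the map (x,y) ↦ Π^N_V(y), a coordinate projection ℝ^{m+n} → ℝ^e, is a good direction for M×_P N; and (iv) the natural projection (x,y) ↦ y is a bijection from M×_P N onto N. -/

import Mathlib

/-- The coordinate projection `Π_λ : ℝⁿ → ℝᵏ` determined by an index map `λ : Fin k → Fin n`. -/
def cproj {k n : ℕ} (lam : Fin k → Fin n) (x : Fin n → ℝ) : Fin k → ℝ :=
  fun i => x (lam i)

/-- A map `π : E → ℝ^d` is a *good direction* for `M ⊆ E` if `π(M)` is open in `ℝ^d`,
`π` is injective on `M`, and the inverse map `π(M) → E` of `π` restricted to `M` is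
real-analytic. -/
def IsGoodDirection {E : Type*} [NormedAddCommGroup E] [NormedSpace ℝ E] {d : ℕ}
    (π : E → (Fin d → ℝ)) (M : Set E) : Prop :=
  IsOpen (π '' M) ∧ Set.InjOn π M ∧
    ∃ F : (Fin d → ℝ) → E, (∀ y ∈ π '' M, AnalyticAt ℝ F y) ∧ ∀ x ∈ M, F (π x) = x

open Module

noncomputable section Aux19

/-- `cproj` as a continuous linear map. -/
def cprojL {k n : ℕ} (lam : Fin k → Fin n) : (Fin n → ℝ) →L[ℝ] (Fin k → ℝ) :=
  ContinuousLinearMap.pi fun i => ContinuousLinearMap.proj (lam i)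

lemma cprojL_apply {k n : ℕ} (lam : Fin k → Fin n) (x : Fin n → ℝ) :
    cprojL lam x = cproj lam x := rfl

lemma fderiv_proj_comp {k l : ℕ} {f : (Fin k → ℝ) → (Fin l → ℝ)} {x : Fin k → ℝ}
    (hf : DifferentiableAt ℝ f x) (i : Fin l) :
    fderiv ℝ (fun z => f z i) x
      = (ContinuousLinearMap.proj i : (Fin l → ℝ) →L[ℝ] ℝ).comp (fderiv ℝ f x) := by
  have hD : HasFDerivAt (fun z => f z i)
      ((ContinuousLinearMap.proj i : (Fin l → ℝ) →L[ℝ] ℝ).comp (fderiv ℝ f x)) x :=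
    ((ContinuousLinearMap.proj i : (Fin l → ℝ) →L[ℝ] ℝ).hasFDerivAt).comp x hf.hasFDerivAt
  exact hD.fderiv

lemma single_eq_ite {k : ℕ} (c : Fin k) :
    (Pi.single c (1:ℝ) : Fin k → ℝ) = fun j => if c = j then 1 else 0 := by
  funext j; simp [Pi.single_apply, eq_comm]

lemma sum_mul_single_apply {k l : ℕ} (L : (Fin k → ℝ) →L[ℝ] (Fin l → ℝ)) (u : Fin k → ℝ)
    (i : Fin l) : ∑ j, L (Pi.single j 1) i * u j = L u i := by
  have h := congrFun (LinearMap.pi_apply_eq_sum_univ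
    (L : (Fin k → ℝ) →ₗ[ℝ] (Fin l → ℝ)) u) i
  rw [Finset.sum_apply] at h
  simp only [← single_eq_ite, Pi.smul_apply, smul_eq_mul, ContinuousLinearMap.coe_coe] at h
  rw [h]
  exact Finset.sum_congr rfl fun j _ => mul_comm _ _

lemma sum_single_one_mul {k : ℕ} (a : Fin k) (u : Fin k → ℝ) :
    ∑ j, (Pi.single j (1:ℝ) : Fin k → ℝ) a * u j = u a := by
  simp [Pi.single_apply]

/-- From a Jacobian matrix rank to the rank of the actual derivative. -/
lemma jacRank {k l : ℕ} {f : (Fin k → ℝ) → (Fin l → ℝ)} {x : Fin k → ℝ}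
    (hf : DifferentiableAt ℝ f x) :
    (Matrix.of fun (i : Fin l) (j : Fin k) =>
        fderiv ℝ (fun z => f z i) x (Pi.single j 1)).rank
      = finrank ℝ (LinearMap.range (fderiv ℝ f x).toLinearMap) := by
  have hm : (Matrix.of fun (i : Fin l) (j : Fin k) =>
      fderiv ℝ (fun z => f z i) x (Pi.single j 1)).mulVecLin
      = (fderiv ℝ f x).toLinearMap := by
    apply LinearMap.ext; intro u
    funext i
    rw [Matrix.mulVecLin_apply]
    show ∑ j, (fderiv ℝ (fun z => f z i) x (Pi.single j 1)) * u j = fderiv ℝ f x u i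
    calc ∑ j, (fderiv ℝ (fun z => f z i) x (Pi.single j 1)) * u j
        = ∑ j, (fderiv ℝ f x (Pi.single j 1) i) * u j := by
          refine Finset.sum_congr rfl fun j _ => ?_
          rw [fderiv_proj_comp hf]; rfl
      _ = fderiv ℝ f x u i := sum_mul_single_apply _ _ _
  unfold Matrix.rank
  rw [hm]

/-- Key lemma: at a point of `M`, the pair (derivative of `f`, good-direction projection)
is a bijective linear map `ℝ^m → ℝ^{m-d} × ℝ^d`. -/
lemma key_bij {m d : ℕ} (hdm : d ≤ m) {UX : Set (Fin m → ℝ)}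
    {f : (Fin m → ℝ) → Fin (m - d) → ℝ}
    (hf : ∀ x ∈ UX, AnalyticAt ℝ f x) {lam : Fin d → Fin m}
    (hMU : IsGoodDirection (cproj lam) {x ∈ UX | f x = 0})
    {x : Fin m → ℝ} (hxU : x ∈ UX) (hxf : f x = 0)
    (hrank : finrank ℝ (LinearMap.range (fderiv ℝ f x).toLinearMap) = m - d) :
    Function.Bijective
      ((fderiv ℝ f x).toLinearMap.prod (cprojL lam).toLinearMap) := by
  obtain ⟨hopen, hinjM, F, hFan, hFeq⟩ := hMU
  have hxM : x ∈ {x ∈ UX | f x = 0} := ⟨hxU, hxf⟩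
  have hw₀ : cproj lam x ∈ cproj lam '' {x ∈ UX | f x = 0} := ⟨x, hxM, rfl⟩
  have hFw₀ : F (cproj lam x) = x := hFeq x hxM
  have hFdiff : DifferentiableAt ℝ F (cproj lam x) := (hFan _ hw₀).differentiableAt
  have hfdiff : DifferentiableAt ℝ f x := (hf x hxU).differentiableAt
  set ψ := fderiv ℝ F (cproj lam x) with hψ
  -- π ∘ F is eventually the identity
  have hev1 : (fun w => cproj lam (F w)) =ᶠ[nhds (cproj lam x)] id := by
    filter_upwards [hopen.mem_nhds hw₀] with w hw
    obtain ⟨z, hz, rfl⟩ := hw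
    rw [hFeq z hz]; rfl
  have h1 : (cprojL lam).comp ψ = ContinuousLinearMap.id ℝ (Fin d → ℝ) := by
    have hc0 := ((cprojL lam).hasFDerivAt (x := F (cproj lam x))).comp
      (cproj lam x) hFdiff.hasFDerivAt
    have hc : HasFDerivAt (fun w => cproj lam (F w)) ((cprojL lam).comp ψ) (cproj lam x) := hc0
    have h := hev1.fderiv_eq (𝕜 := ℝ)
    rw [hc.fderiv] at h
    rw [h, fderiv_id]
  have hπψ : ∀ v, cproj lam (ψ v) = v := fun v => ContinuousLinearMap.ext_iff.mp h1 v
  -- f ∘ F is eventually 0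
  have hev2 : (fun w => f (F w)) =ᶠ[nhds (cproj lam x)] (fun _ => (0 : Fin (m - d) → ℝ)) := by
    filter_upwards [hopen.mem_nhds hw₀] with w hw
    obtain ⟨z, hz, rfl⟩ := hw
    rw [hFeq z hz]; exact hz.2
  have h2 : (fderiv ℝ f x).comp ψ = 0 := by
    have hfd' : HasFDerivAt f (fderiv ℝ f x) (F (cproj lam x)) := hFw₀.symm ▸ hfdiff.hasFDerivAt
    have hc0 := hfd'.comp (cproj lam x) hFdiff.hasFDerivAt
    have hc : HasFDerivAt (fun w => f (F w)) ((fderiv ℝ f x).comp ψ) (cproj lam x) := hc0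
    have h := hev2.fderiv_eq (𝕜 := ℝ)
    rw [hc.fderiv, fderiv_const_apply] at h
    exact h
  have hLψ : ∀ v, fderiv ℝ f x (ψ v) = 0 := by
    intro v
    have := ContinuousLinearMap.ext_iff.mp h2 v
    simpa using this
  have hψinj : Function.Injective ψ := by
    intro a b hab
    have ha := hπψ a
    rw [hab, hπψ b] at ha
    exact ha.symm
  have hrψ : finrank ℝ (LinearMap.range ψ.toLinearMap) = d := by
    rw [LinearMap.finrank_range_of_inj hψinj, Module.finrank_fin_fun]
  have hkf : finrank ℝ (LinearMap.ker (fderiv ℝ f x).toLinearMap) = d := by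
    have hh := LinearMap.finrank_range_add_finrank_ker (fderiv ℝ f x).toLinearMap
    rw [hrank, Module.finrank_fin_fun] at hh
    omega
  have hle : LinearMap.range ψ.toLinearMap ≤ LinearMap.ker (fderiv ℝ f x).toLinearMap := by
    rintro _ ⟨v, rfl⟩
    exact LinearMap.mem_ker.mpr (hLψ v)
  have heq : LinearMap.range ψ.toLinearMap = LinearMap.ker (fderiv ℝ f x).toLinearMap :=
    Submodule.eq_of_le_of_finrank_le hle (le_of_eq (hkf.trans hrψ.symm))
  have hinj : Function.Injective
      ((fderiv ℝ f x).toLinearMap.prod (cprojL lam).toLinearMap) := by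
    rw [← LinearMap.ker_eq_bot, LinearMap.ker_prod, Submodule.eq_bot_iff]
    rintro u hu
    obtain ⟨hu1, hu2⟩ := Submodule.mem_inf.mp hu
    have hur : u ∈ LinearMap.range ψ.toLinearMap := heq ▸ hu1
    obtain ⟨v, rfl⟩ := hur
    have hv : v = 0 := by
      have h := hπψ v
      have h0 : cproj lam (ψ v) = 0 := hu2
      rw [h0] at h
      exact h.symm
    rw [hv]
    exact map_zero _
  refine ⟨hinj, (LinearMap.injective_iff_surjective_of_finrank_eq_finrank ?_).mp hinj⟩
  rw [Module.finrank_fin_fun, Module.finrank_prod, Module.finrank_fin_fun,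
    Module.finrank_fin_fun]
  omega

end Aux19

/-- **Fiber Product Lemma.**  With `M ⊆ ℝᵐ` and `N ⊆ ℝⁿ` nonsingularly defined by the
real-analytic maps `f : U_X → ℝ^{m−d}` and `g : U_Y → ℝ^{n−e}`, coordinate projections
`Π^M_P : ℝᵐ → ℝᵖ`, `Π^P_U : ℝᵖ → ℝ^d`, `Π^N_P : ℝⁿ → ℝᵖ`, `Π^N_V : ℝⁿ → ℝᵉ` such that
`Π^M_U = Π^P_U∘Π^M_P` is a good direction for `M`, `Π^N_V` is a good direction for `N`,
and `Π^N_P(N) ⊆ P = Π^M_P(M)`, the fiber product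
`M×_P N = {(x,y) ∈ M×N : Π^M_P(x) = Π^N_P(y)}` satisfies:
(i) it equals `{(x,y) ∈ U_X×U_Y : f(x)=0, g(y)=0, Π^M_U(x) − Π^N_U(y) = 0}`;
(ii) the Jacobian of `(x,y) ↦ (f(x), g(y), Π^M_U(x)−Π^N_U(y))` has rank `m+n−e` at each of
its points; (iii) `(x,y) ↦ Π^N_V(y)` is a good direction for it; and (iv) `(x,y) ↦ y` maps
it bijectively onto `N`. -/
theorem stmt19 {m n p d e : ℕ} (hdp : d ≤ p) (hpm : p ≤ m) (hpn : p ≤ n) (hen : e ≤ n)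
    (UX : Set (Fin m → ℝ)) (hUX : IsOpen UX) (UY : Set (Fin n → ℝ)) (hUY : IsOpen UY)
    (f : (Fin m → ℝ) → Fin (m - d) → ℝ) (g : (Fin n → ℝ) → Fin (n - e) → ℝ)
    (hf : ∀ x ∈ UX, AnalyticAt ℝ f x) (hg : ∀ y ∈ UY, AnalyticAt ℝ g y)
    (hfRank : ∀ x ∈ {x ∈ UX | f x = 0},
      (Matrix.of fun (i : Fin (m - d)) (j : Fin m) =>
        fderiv ℝ (fun z => f z i) x (Pi.single j 1)).rank = m - d)
    (hgRank : ∀ y ∈ {y ∈ UY | g y = 0},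
      (Matrix.of fun (i : Fin (n - e)) (j : Fin n) =>
        fderiv ℝ (fun z => g z i) y (Pi.single j 1)).rank = n - e)
    (lMP : Fin p → Fin m) (hlMP : Function.Injective lMP)
    (lPU : Fin d → Fin p) (hlPU : Function.Injective lPU)
    (lNP : Fin p → Fin n) (hlNP : Function.Injective lNP)
    (lNV : Fin e → Fin n) (hlNV : Function.Injective lNV)
    (hMU : IsGoodDirection (cproj (lMP ∘ lPU)) {x ∈ UX | f x = 0})
    (hNV : IsGoodDirection (cproj lNV) {y ∈ UY | g y = 0})
    (hNP : cproj lNP '' {y ∈ UY | g y = 0} ⊆ cproj lMP '' {x ∈ UX | f x = 0}) :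
    ({q : (Fin m → ℝ) × (Fin n → ℝ) |
        q.1 ∈ {x ∈ UX | f x = 0} ∧ q.2 ∈ {y ∈ UY | g y = 0} ∧ cproj lMP q.1 = cproj lNP q.2}
      = {q : (Fin m → ℝ) × (Fin n → ℝ) |
          q.1 ∈ UX ∧ q.2 ∈ UY ∧ f q.1 = 0 ∧ g q.2 = 0 ∧
            cproj (lMP ∘ lPU) q.1 - cproj (lNP ∘ lPU) q.2 = 0})
    ∧ (∀ q ∈ {q : (Fin m → ℝ) × (Fin n → ℝ) |
        q.1 ∈ {x ∈ UX | f x = 0} ∧ q.2 ∈ {y ∈ UY | g y = 0} ∧ cproj lMP q.1 = cproj lNP q.2},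
        (Matrix.of fun (i : Fin (m - d) ⊕ Fin (n - e) ⊕ Fin d) (c : Fin m ⊕ Fin n) =>
          fderiv ℝ
            (fun q' : (Fin m → ℝ) × (Fin n → ℝ) =>
              Sum.elim (fun i₁ => f q'.1 i₁)
                (Sum.elim (fun i₂ => g q'.2 i₂)
                  (fun i₃ => q'.1 (lMP (lPU i₃)) - q'.2 (lNP (lPU i₃)))) i)
            q
            (Sum.elim (fun j₁ => ((Pi.single j₁ 1 : Fin m → ℝ), (0 : Fin n → ℝ)))
              (fun j₂ => ((0 : Fin m → ℝ), (Pi.single j₂ 1 : Fin n → ℝ))) c)).rank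
          = m + n - e)
    ∧ IsGoodDirection (fun q : (Fin m → ℝ) × (Fin n → ℝ) => cproj lNV q.2)
        {q : (Fin m → ℝ) × (Fin n → ℝ) |
          q.1 ∈ {x ∈ UX | f x = 0} ∧ q.2 ∈ {y ∈ UY | g y = 0} ∧ cproj lMP q.1 = cproj lNP q.2}
    ∧ Set.BijOn (fun q : (Fin m → ℝ) × (Fin n → ℝ) => q.2)
        {q : (Fin m → ℝ) × (Fin n → ℝ) |
          q.1 ∈ {x ∈ UX | f x = 0} ∧ q.2 ∈ {y ∈ UY | g y = 0} ∧ cproj lMP q.1 = cproj lNP q.2}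
        {y ∈ UY | g y = 0} := by
  have hdm : d ≤ m := le_trans hdp hpm
  have hMPinj : Set.InjOn (cproj lMP) {x ∈ UX | f x = 0} := by
    intro a ha b hb hab
    refine hMU.2.1 ha hb ?_
    funext i
    exact congrFun hab (lPU i)
  -- part (i)
  have hi : {q : (Fin m → ℝ) × (Fin n → ℝ) |
        q.1 ∈ {x ∈ UX | f x = 0} ∧ q.2 ∈ {y ∈ UY | g y = 0} ∧ cproj lMP q.1 = cproj lNP q.2}
      = {q : (Fin m → ℝ) × (Fin n → ℝ) |
          q.1 ∈ UX ∧ q.2 ∈ UY ∧ f q.1 = 0 ∧ g q.2 = 0 ∧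
            cproj (lMP ∘ lPU) q.1 - cproj (lNP ∘ lPU) q.2 = 0} := by
    ext q
    simp only [Set.mem_setOf_eq]
    constructor
    · rintro ⟨⟨h1, h2⟩, ⟨h3, h4⟩, h5⟩
      refine ⟨h1, h3, h2, h4, ?_⟩
      have hUeq : cproj (lMP ∘ lPU) q.1 = cproj (lNP ∘ lPU) q.2 :=
        funext fun i => congrFun h5 (lPU i)
      rw [hUeq, sub_self]
    · rintro ⟨h1, h2, h3, h4, h5⟩
      refine ⟨⟨h1, h3⟩, ⟨h2, h4⟩, ?_⟩
      obtain ⟨x', hx', hpx⟩ := hNP ⟨q.2, ⟨h2, h4⟩, rfl⟩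
      have h5' : cproj (lMP ∘ lPU) q.1 = cproj (lNP ∘ lPU) q.2 := sub_eq_zero.mp h5
      have hU : cproj (lMP ∘ lPU) x' = cproj (lMP ∘ lPU) q.1 := by
        funext i
        calc cproj (lMP ∘ lPU) x' i = cproj lNP q.2 (lPU i) := congrFun hpx (lPU i)
          _ = cproj (lMP ∘ lPU) q.1 i := (congrFun h5' i).symm
      have hx'q : x' = q.1 := hMU.2.1 hx' ⟨h1, h3⟩ hU
      rw [← hx'q]
      exact hpx
  -- part (iv)
  have hiv : Set.BijOn (fun q : (Fin m → ℝ) × (Fin n → ℝ) => q.2)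
      {q : (Fin m → ℝ) × (Fin n → ℝ) |
        q.1 ∈ {x ∈ UX | f x = 0} ∧ q.2 ∈ {y ∈ UY | g y = 0} ∧ cproj lMP q.1 = cproj lNP q.2}
      {y ∈ UY | g y = 0} := by
    refine ⟨fun q hq => hq.2.1, ?_, ?_⟩
    · rintro q ⟨hq1, hq2, hq3⟩ q' ⟨hq1', hq2', hq3'⟩ h
      have h2 : q.2 = q'.2 := h
      have h1 : q.1 = q'.1 := by
        apply hMPinj hq1 hq1'
        rw [hq3, hq3', h2]
      exact Prod.ext h1 h2
    · rintro y hy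
      obtain ⟨x, hx, hpx⟩ := hNP ⟨y, hy, rfl⟩
      exact ⟨(x, y), ⟨hx, hy, hpx⟩, rfl⟩
  -- part (iii)
  have hiii : IsGoodDirection (fun q : (Fin m → ℝ) × (Fin n → ℝ) => cproj lNV q.2)
      {q : (Fin m → ℝ) × (Fin n → ℝ) |
        q.1 ∈ {x ∈ UX | f x = 0} ∧ q.2 ∈ {y ∈ UY | g y = 0} ∧ cproj lMP q.1 = cproj lNP q.2} := by
    obtain ⟨F, hFan, hFeq⟩ := hMU.2.2
    obtain ⟨G, hGan, hGeq⟩ := hNV.2.2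
    have himg : (fun q : (Fin m → ℝ) × (Fin n → ℝ) => cproj lNV q.2) ''
        {q : (Fin m → ℝ) × (Fin n → ℝ) |
          q.1 ∈ {x ∈ UX | f x = 0} ∧ q.2 ∈ {y ∈ UY | g y = 0} ∧ cproj lMP q.1 = cproj lNP q.2}
        = cproj lNV '' {y ∈ UY | g y = 0} := by
      ext w
      constructor
      · rintro ⟨q, ⟨hq1, hq2, hq3⟩, rfl⟩
        exact ⟨q.2, hq2, rfl⟩
      · rintro ⟨y, hy, rfl⟩
        obtain ⟨x, hx, hpx⟩ := hNP ⟨y, hy, rfl⟩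
        exact ⟨(x, y), ⟨hx, hy, hpx⟩, rfl⟩
    refine ⟨by rw [himg]; exact hNV.1, ?_, ?_⟩
    · rintro q ⟨hq1, hq2, hq3⟩ q' ⟨hq1', hq2', hq3'⟩ h
      have h2 : q.2 = q'.2 := hNV.2.1 hq2 hq2' h
      have h1 : q.1 = q'.1 := hMPinj hq1 hq1' (by rw [hq3, hq3', h2])
      exact Prod.ext h1 h2
    · refine ⟨fun w => (F (cproj (lNP ∘ lPU) (G w)), G w), ?_, ?_⟩
      · rintro w hw
        rw [himg] at hw
        obtain ⟨y, hy, rfl⟩ := hw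
        obtain ⟨x, hx, hpx⟩ := hNP ⟨y, hy, rfl⟩
        have hG : AnalyticAt ℝ G (cproj lNV y) := hGan _ ⟨y, hy, rfl⟩
        have hGy : G (cproj lNV y) = y := hGeq y hy
        have hmid : AnalyticAt ℝ (cproj (lNP ∘ lPU) : (Fin n → ℝ) → (Fin d → ℝ))
            (G (cproj lNV y)) := (cprojL (lNP ∘ lPU)).analyticAt _
        have hptF : cproj (lNP ∘ lPU) (G (cproj lNV y))
            ∈ cproj (lMP ∘ lPU) '' {x ∈ UX | f x = 0} := by
          refine ⟨x, hx, ?_⟩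
          rw [hGy]
          funext i
          exact congrFun hpx (lPU i)
        have hF : AnalyticAt ℝ F (cproj (lNP ∘ lPU) (G (cproj lNV y))) := hFan _ hptF
        exact ((hF.comp hmid).comp hG).prod hG
      · rintro q ⟨hq1, hq2, hq3⟩
        have hGy : G (cproj lNV q.2) = q.2 := hGeq q.2 hq2
        have hpt : cproj (lNP ∘ lPU) q.2 = cproj (lMP ∘ lPU) q.1 := by
          funext i
          exact (congrFun hq3 (lPU i)).symm
        show (F (cproj (lNP ∘ lPU) (G (cproj lNV q.2))), G (cproj lNV q.2)) = q
        rw [hGy, hpt, hFeq q.1 hq1]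
  refine ⟨hi, ?_, hiii, hiv⟩
  -- part (ii)
  rintro q ⟨⟨hq1U, hq1f⟩, ⟨hq2U, hq2g⟩, hqP⟩
  have hfd : DifferentiableAt ℝ f q.1 := (hf _ hq1U).differentiableAt
  have hgd : DifferentiableAt ℝ g q.2 := (hg _ hq2U).differentiableAt
  set Lf := fderiv ℝ f q.1 with hLf
  set Lg := fderiv ℝ g q.2 with hLg
  set A : Matrix (Fin (m - d) ⊕ Fin (n - e) ⊕ Fin d) (Fin m ⊕ Fin n) ℝ :=
    Matrix.of fun (i : Fin (m - d) ⊕ Fin (n - e) ⊕ Fin d) (c : Fin m ⊕ Fin n) =>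
      fderiv ℝ
        (fun q' : (Fin m → ℝ) × (Fin n → ℝ) =>
          Sum.elim (fun i₁ => f q'.1 i₁)
            (Sum.elim (fun i₂ => g q'.2 i₂)
              (fun i₃ => q'.1 (lMP (lPU i₃)) - q'.2 (lNP (lPU i₃)))) i)
        q
        (Sum.elim (fun j₁ => ((Pi.single j₁ 1 : Fin m → ℝ), (0 : Fin n → ℝ)))
          (fun j₂ => ((0 : Fin m → ℝ), (Pi.single j₂ 1 : Fin n → ℝ))) c) with hA
  -- derivative computations
  have hfst : HasFDerivAt (fun q' : (Fin m → ℝ) × (Fin n → ℝ) => f q'.1)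
      (Lf.comp (ContinuousLinearMap.fst ℝ (Fin m → ℝ) (Fin n → ℝ))) q :=
    hfd.hasFDerivAt.comp q hasFDerivAt_fst
  have hsnd : HasFDerivAt (fun q' : (Fin m → ℝ) × (Fin n → ℝ) => g q'.2)
      (Lg.comp (ContinuousLinearMap.snd ℝ (Fin m → ℝ) (Fin n → ℝ))) q :=
    hgd.hasFDerivAt.comp q hasFDerivAt_snd
  have hA1 : ∀ (i₁ : Fin (m - d)) (vv : (Fin m → ℝ) × (Fin n → ℝ)),
      fderiv ℝ (fun q' : (Fin m → ℝ) × (Fin n → ℝ) => f q'.1 i₁) q vv = Lf vv.1 i₁ := by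
    intro i₁ vv
    have hD : HasFDerivAt (fun q' : (Fin m → ℝ) × (Fin n → ℝ) => f q'.1 i₁)
        ((ContinuousLinearMap.proj i₁ : (Fin (m - d) → ℝ) →L[ℝ] ℝ).comp
          (Lf.comp (ContinuousLinearMap.fst ℝ (Fin m → ℝ) (Fin n → ℝ)))) q :=
      by
        have h := ((ContinuousLinearMap.proj (R := ℝ) (φ := fun _ : Fin (m - d) => ℝ) i₁).hasFDerivAt
          (x := f q.1)).comp q hfst
        exact h
    rw [hD.fderiv]
    rfl
  have hA2 : ∀ (i₂ : Fin (n - e)) (vv : (Fin m → ℝ) × (Fin n → ℝ)),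
      fderiv ℝ (fun q' : (Fin m → ℝ) × (Fin n → ℝ) => g q'.2 i₂) q vv = Lg vv.2 i₂ := by
    intro i₂ vv
    have hD : HasFDerivAt (fun q' : (Fin m → ℝ) × (Fin n → ℝ) => g q'.2 i₂)
        ((ContinuousLinearMap.proj i₂ : (Fin (n - e) → ℝ) →L[ℝ] ℝ).comp
          (Lg.comp (ContinuousLinearMap.snd ℝ (Fin m → ℝ) (Fin n → ℝ)))) q :=
      by
        have h := ((ContinuousLinearMap.proj (R := ℝ) (φ := fun _ : Fin (n - e) => ℝ) i₂).hasFDerivAt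
          (x := g q.2)).comp q hsnd
        exact h
    rw [hD.fderiv]
    rfl
  have hA3 : ∀ (i₃ : Fin d) (vv : (Fin m → ℝ) × (Fin n → ℝ)),
      fderiv ℝ (fun q' : (Fin m → ℝ) × (Fin n → ℝ) =>
          q'.1 (lMP (lPU i₃)) - q'.2 (lNP (lPU i₃))) q vv
        = vv.1 (lMP (lPU i₃)) - vv.2 (lNP (lPU i₃)) := by
    intro i₃ vv
    set c1 : ((Fin m → ℝ) × (Fin n → ℝ)) →L[ℝ] ℝ :=
      (ContinuousLinearMap.proj (lMP (lPU i₃)) : (Fin m → ℝ) →L[ℝ] ℝ).comp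
        (ContinuousLinearMap.fst ℝ (Fin m → ℝ) (Fin n → ℝ)) with hc1
    set c2 : ((Fin m → ℝ) × (Fin n → ℝ)) →L[ℝ] ℝ :=
      (ContinuousLinearMap.proj (lNP (lPU i₃)) : (Fin n → ℝ) →L[ℝ] ℝ).comp
        (ContinuousLinearMap.snd ℝ (Fin m → ℝ) (Fin n → ℝ)) with hc2
    have hD : HasFDerivAt (fun q' : (Fin m → ℝ) × (Fin n → ℝ) =>
        q'.1 (lMP (lPU i₃)) - q'.2 (lNP (lPU i₃))) (c1 - c2) q :=
      (c1.hasFDerivAt (x := q)).sub (c2.hasFDerivAt (x := q))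
    rw [hD.fderiv]
    rfl
  -- entry computations
  have hAa : ∀ (i₁ : Fin (m - d)) (c : Fin m ⊕ Fin n), A (Sum.inl i₁) c
      = Lf ((Sum.elim (fun j₁ => ((Pi.single j₁ 1 : Fin m → ℝ), (0 : Fin n → ℝ)))
          (fun j₂ => ((0 : Fin m → ℝ), (Pi.single j₂ 1 : Fin n → ℝ))) c).1) i₁ :=
    fun i₁ c => hA1 i₁ _
  have hAb : ∀ (i₂ : Fin (n - e)) (c : Fin m ⊕ Fin n), A (Sum.inr (Sum.inl i₂)) c
      = Lg ((Sum.elim (fun j₁ => ((Pi.single j₁ 1 : Fin m → ℝ), (0 : Fin n → ℝ)))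
          (fun j₂ => ((0 : Fin m → ℝ), (Pi.single j₂ 1 : Fin n → ℝ))) c).2) i₂ :=
    fun i₂ c => hA2 i₂ _
  have hAc : ∀ (i₃ : Fin d) (c : Fin m ⊕ Fin n), A (Sum.inr (Sum.inr i₃)) c
      = ((Sum.elim (fun j₁ => ((Pi.single j₁ 1 : Fin m → ℝ), (0 : Fin n → ℝ)))
          (fun j₂ => ((0 : Fin m → ℝ), (Pi.single j₂ 1 : Fin n → ℝ))) c).1) (lMP (lPU i₃))
        - ((Sum.elim (fun j₁ => ((Pi.single j₁ 1 : Fin m → ℝ), (0 : Fin n → ℝ)))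
          (fun j₂ => ((0 : Fin m → ℝ), (Pi.single j₂ 1 : Fin n → ℝ))) c).2) (lNP (lPU i₃)) :=
    fun i₃ c => hA3 i₃ _
  -- ranks of the derivatives
  have hfR : finrank ℝ (LinearMap.range Lf.toLinearMap) = m - d :=
    (jacRank hfd).symm.trans (hfRank q.1 ⟨hq1U, hq1f⟩)
  have hgR : finrank ℝ (LinearMap.range Lg.toLinearMap) = n - e :=
    (jacRank hgd).symm.trans (hgRank q.2 ⟨hq2U, hq2g⟩)
  have hbij := key_bij hdm hf hMU hq1U hq1f hfR
  have hgsurj : Function.Surjective Lg := by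
    have htop : LinearMap.range Lg.toLinearMap = ⊤ :=
      Submodule.eq_top_of_finrank_eq (by rw [hgR, Module.finrank_fin_fun])
    intro b
    obtain ⟨v, hv⟩ := LinearMap.range_eq_top.mp htop b
    exact ⟨v, hv⟩
  -- surjectivity of the Jacobian
  have hsurj : Function.Surjective A.mulVecLin := by
    intro h
    obtain ⟨v, hv⟩ := hgsurj (fun i₂ => h (Sum.inr (Sum.inl i₂)))
    obtain ⟨u, hu⟩ := hbij.2 ((fun i₁ => h (Sum.inl i₁)),
      (fun i₃ => h (Sum.inr (Sum.inr i₃)) + v (lNP (lPU i₃))))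
    have hu1 : Lf u = fun i₁ => h (Sum.inl i₁) := congrArg Prod.fst hu
    have hu2 : cproj (lMP ∘ lPU) u
        = fun i₃ => h (Sum.inr (Sum.inr i₃)) + v (lNP (lPU i₃)) := congrArg Prod.snd hu
    refine ⟨Sum.elim u v, ?_⟩
    funext r
    rw [Matrix.mulVecLin_apply]
    show ∑ c, A r c * Sum.elim u v c = h r
    rw [Fintype.sum_sum_type]
    rcases r with i₁ | i₂ | i₃
    · simp only [hAa, Sum.elim_inl, Sum.elim_inr, map_zero, Pi.zero_apply, zero_mul,
        mul_zero, Finset.sum_const_zero, add_zero]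
      rw [sum_mul_single_apply Lf u i₁]
      exact congrFun hu1 i₁
    · simp only [hAb, Sum.elim_inl, Sum.elim_inr, map_zero, Pi.zero_apply, zero_mul,
        mul_zero, Finset.sum_const_zero, zero_add]
      rw [sum_mul_single_apply Lg v i₂]
      exact congrFun hv i₂
    · simp only [hAc, Sum.elim_inl, Sum.elim_inr, Pi.zero_apply, sub_zero, zero_sub, neg_mul]
      rw [Finset.sum_neg_distrib, sum_single_one_mul, sum_single_one_mul]
      have := congrFun hu2 i₃
      have hcu : u (lMP (lPU i₃)) = h (Sum.inr (Sum.inr i₃)) + v (lNP (lPU i₃)) := this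
      rw [hcu]
      ring
  -- conclude
  have htop : LinearMap.range A.mulVecLin = ⊤ := LinearMap.range_eq_top.mpr hsurj
  have hrk : A.rank = finrank ℝ (LinearMap.range A.mulVecLin) := rfl
  rw [hrk, htop, finrank_top, Module.finrank_fintype_fun_eq_card, Fintype.card_sum,
    Fintype.card_sum, Fintype.card_fin, Fintype.card_fin, Fintype.card_fin]
  omega
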